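/- Let X be a set and let 𝒜, ℬ be collections of subsets of X with ℬ Γ-like and ℬ ⊆ 𝒜. Then Player I has a winning (perfect-information) strategy in G₁(𝒜,ℬ) if and only if Player I has a winning predetermined strategy in G₁(𝒜,ℬ). -/
import Mathlib


open Set

/-- A collection `𝒜` of subsets of `X` is Γ-like if every member is infinite
and every infinite subset of a member is itself a member. -/
def GammaLike {X : Type*} (𝒜 : Set (Set X)) : Prop :=
  ∀ A ∈ 𝒜, A.Infinite ∧ ∀ A' ⊆ A, A'.Infinite → A' ∈ 𝒜

/-- A collection `𝒜` is almost-Γ-like if each `A ∈ 𝒜` has a countably infinite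
subset `A'` all of whose cofinite subsets belong to `𝒜`. -/
def AlmostGammaLike {X : Type*} (𝒜 : Set (Set X)) : Prop :=
  ∀ A ∈ 𝒜, ∃ A' ⊆ A, A'.Countable ∧ A'.Infinite ∧
    ∀ A'' ⊆ A', (A' \ A'').Finite → A'' ∈ 𝒜

/-- `𝒜` is closed under finite unions. -/
def UnionClosed {X : Type*} (𝒜 : Set (Set X)) : Prop :=
  ∀ A ∈ 𝒜, ∀ B ∈ 𝒜, A ∪ B ∈ 𝒜

/-- α₁(𝒜,ℬ): for every sequence from 𝒜 there is `B ∈ ℬ` with `A n \ B` finite for all `n`. -/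
def Alpha1 {X : Type*} (𝒜 ℬ : Set (Set X)) : Prop :=
  ∀ A : ℕ → Set X, (∀ n, A n ∈ 𝒜) → ∃ B ∈ ℬ, ∀ n, (A n \ B).Finite

/-- α₂(𝒜,ℬ): for every sequence from 𝒜 there is `B ∈ ℬ` meeting each `A n` infinitely. -/
def Alpha2 {X : Type*} (𝒜 ℬ : Set (Set X)) : Prop :=
  ∀ A : ℕ → Set X, (∀ n, A n ∈ 𝒜) → ∃ B ∈ ℬ, ∀ n, (A n ∩ B).Infinite

/-- α₂'(𝒜,ℬ): for every sequence from 𝒜 there is `B ∈ ℬ` meeting each `A n`. -/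
def Alpha2' {X : Type*} (𝒜 ℬ : Set (Set X)) : Prop :=
  ∀ A : ℕ → Set X, (∀ n, A n ∈ 𝒜) → ∃ B ∈ ℬ, ∀ n, (A n ∩ B).Nonempty

/-- α₃(𝒜,ℬ): for every sequence from 𝒜 there is `B ∈ ℬ` meeting infinitely many `A n` infinitely. -/
def Alpha3 {X : Type*} (𝒜 ℬ : Set (Set X)) : Prop :=
  ∀ A : ℕ → Set X, (∀ n, A n ∈ 𝒜) → ∃ B ∈ ℬ, {n | (A n ∩ B).Infinite}.Infinite

/-- α₄(𝒜,ℬ): for every sequence from 𝒜 there is `B ∈ ℬ` meeting infinitely many `A n`. -/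
def Alpha4 {X : Type*} (𝒜 ℬ : Set (Set X)) : Prop :=
  ∀ A : ℕ → Set X, (∀ n, A n ∈ 𝒜) → ∃ B ∈ ℬ, {n | (A n ∩ B).Nonempty}.Infinite

/-- α_{1.1}(𝒜,ℬ): α₁ restricted to pairwise disjoint sequences. -/
def Alpha1p1 {X : Type*} (𝒜 ℬ : Set (Set X)) : Prop :=
  ∀ A : ℕ → Set X, (∀ n, A n ∈ 𝒜) → (∀ m n, m ≠ n → Disjoint (A m) (A n)) →
    ∃ B ∈ ℬ, ∀ n, (A n \ B).Finite

/-- α_{1.5}(𝒜,ℬ): for pairwise disjoint sequences from 𝒜 there is `B ∈ ℬ` with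
`A n \ B` finite for infinitely many `n`. -/
def Alpha1p5 {X : Type*} (𝒜 ℬ : Set (Set X)) : Prop :=
  ∀ A : ℕ → Set X, (∀ n, A n ∈ 𝒜) → (∀ m n, m ≠ n → Disjoint (A m) (A n)) →
    ∃ B ∈ ℬ, {n | (A n \ B).Finite}.Infinite

/-- α_{2.1}(𝒜,ℬ): α₂ restricted to pairwise disjoint sequences. -/
def Alpha2p1 {X : Type*} (𝒜 ℬ : Set (Set X)) : Prop :=
  ∀ A : ℕ → Set X, (∀ n, A n ∈ 𝒜) → (∀ m n, m ≠ n → Disjoint (A m) (A n)) →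
    ∃ B ∈ ℬ, ∀ n, (A n ∩ B).Infinite

/-- α_{3.1}(𝒜,ℬ): α₃ restricted to pairwise disjoint sequences. -/
def Alpha3p1 {X : Type*} (𝒜 ℬ : Set (Set X)) : Prop :=
  ∀ A : ℕ → Set X, (∀ n, A n ∈ 𝒜) → (∀ m n, m ≠ n → Disjoint (A m) (A n)) →
    ∃ B ∈ ℬ, {n | (A n ∩ B).Infinite}.Infinite

/-- α_{4.1}(𝒜,ℬ): α₄ restricted to pairwise disjoint sequences. -/
def Alpha4p1 {X : Type*} (𝒜 ℬ : Set (Set X)) : Prop :=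
  ∀ A : ℕ → Set X, (∀ n, A n ∈ 𝒜) → (∀ m n, m ≠ n → Disjoint (A m) (A n)) →
    ∃ B ∈ ℬ, {n | (A n ∩ B).Nonempty}.Infinite

/-- Player I has a winning predetermined strategy in G₁(𝒜,ℬ). -/
def PredWinG1 {X : Type*} (𝒜 ℬ : Set (Set X)) : Prop :=
  ∃ A : ℕ → Set X, (∀ n, A n ∈ 𝒜) ∧
    ∀ a : ℕ → X, (∀ n, a n ∈ A n) → Set.range a ∉ ℬ

/-- Player I has a winning predetermined strategy in G_fin(𝒜,ℬ). -/
def PredWinGfin {X : Type*} (𝒜 ℬ : Set (Set X)) : Prop :=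
  ∃ A : ℕ → Set X, (∀ n, A n ∈ 𝒜) ∧
    ∀ F : ℕ → Set X, (∀ n, (F n).Finite ∧ F n ⊆ A n) → (⋃ n, F n) ∉ ℬ

/-- Player I has a winning predetermined strategy in G_{<2}(𝒜,ℬ),
where II picks at most one point each round. -/
def PredWinGlt2 {X : Type*} (𝒜 ℬ : Set (Set X)) : Prop :=
  ∃ A : ℕ → Set X, (∀ n, A n ∈ 𝒜) ∧
    ∀ F : ℕ → Set X, (∀ n, (F n).Subsingleton ∧ F n ⊆ A n) → (⋃ n, F n) ∉ ℬ

/-- Player I has a winning predetermined strategy in G_cf(𝒜,ℬ),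
where II picks a cofinite subset each round. -/
def PredWinGcf {X : Type*} (𝒜 ℬ : Set (Set X)) : Prop :=
  ∃ A : ℕ → Set X, (∀ n, A n ∈ 𝒜) ∧
    ∀ B : ℕ → Set X, (∀ n, B n ⊆ A n ∧ (A n \ B n).Finite) → (⋃ n, B n) ∉ ℬ

/-- Player I has a winning perfect-information strategy in G₁(𝒜,ℬ):
a function from finite sequences of points of X into 𝒜 defeating all counterplays. -/
def WinG1 {X : Type*} (𝒜 ℬ : Set (Set X)) : Prop :=
  ∃ σ : List X → Set X, (∀ s, σ s ∈ 𝒜) ∧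
    ∀ a : ℕ → X, (∀ n, a n ∈ σ (List.ofFn fun i : Fin n => a i)) → Set.range a ∉ ℬ

/-- Player I has a winning perfect-information strategy in G_fin(𝒜,ℬ):
a function from finite sequences of finite subsets of X into 𝒜 defeating all counterplays. -/
def WinGfin {X : Type*} (𝒜 ℬ : Set (Set X)) : Prop :=
  ∃ σ : List (Set X) → Set X, (∀ s : List (Set X), (∀ F ∈ s, F.Finite) → σ s ∈ 𝒜) ∧
    ∀ F : ℕ → Set X,
      (∀ n, (F n).Finite ∧ F n ⊆ σ (List.ofFn fun i : Fin n => F i)) →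
      (⋃ n, F n) ∉ ℬ

/-- Player I has a winning perfect-information strategy in G_{<2}(𝒜,ℬ):
a function from finite sequences of at-most-singleton subsets of X into 𝒜
defeating all counterplays. -/
def WinGlt2 {X : Type*} (𝒜 ℬ : Set (Set X)) : Prop :=
  ∃ σ : List (Set X) → Set X, (∀ s : List (Set X), (∀ F ∈ s, F.Subsingleton) → σ s ∈ 𝒜) ∧
    ∀ F : ℕ → Set X,
      (∀ n, (F n).Subsingleton ∧ F n ⊆ σ (List.ofFn fun i : Fin n => F i)) →
      (⋃ n, F n) ∉ ℬ

/-- Auxiliary: tree of positions reachable by playing points from `C s` at position `s`. -/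
inductive ReachT {X : Type*} (C : List X → Set X) : List X → Prop
  | nil : ReachT C []
  | snoc (s : List X) (x : X) : ReachT C s → x ∈ C s → ReachT C (s ++ [x])

lemma reachT_countable {X : Type*} (C : List X → Set X) (hC : ∀ s, (C s).Countable) :
    {s | ReachT C s}.Countable := by
  have h : ∀ n, {s | ReachT C s ∧ s.length = n}.Countable := by
    intro n
    induction n with
    | zero =>
      apply Set.Countable.mono _ (Set.countable_singleton ([] : List X))
      rintro s ⟨-, hl⟩
      simp [List.length_eq_zero_iff.mp hl]
    | succ n ih =>
      have hsub : {s | ReachT C s ∧ s.length = n + 1} ⊆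
          ⋃ s ∈ {s | ReachT C s ∧ s.length = n}, (fun x => s ++ [x]) '' C s := by
        rintro t ⟨ht, hl⟩
        cases ht with
        | nil => simp at hl
        | snoc s x hs hx =>
          have hsl : s.length = n := by simpa using hl
          exact Set.mem_biUnion ⟨hs, hsl⟩ ⟨x, hx, rfl⟩
      exact Set.Countable.mono hsub (ih.biUnion fun s _ => (hC s).image _)
  have heq : {s | ReachT C s} = ⋃ n, {s | ReachT C s ∧ s.length = n} := by
    ext s
    simp only [Set.mem_setOf_eq, Set.mem_iUnion]
    exact ⟨fun h => ⟨s.length, h, rfl⟩, fun ⟨n, h, _⟩ => h⟩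
  rw [heq]
  exact Set.countable_iUnion h

/-- If ℬ is Γ-like and ℬ ⊆ 𝒜, Player I has a winning perfect-information strategy
in G₁(𝒜,ℬ) iff Player I has a winning predetermined strategy there. -/
theorem stmt10 {X : Type*} (𝒜 ℬ : Set (Set X))
    (hB : GammaLike ℬ) (hBA : ℬ ⊆ 𝒜) :
    WinG1 𝒜 ℬ ↔ PredWinG1 𝒜 ℬ := by
  constructor
  · rintro ⟨σ, hσA, hσw⟩
    by_contra hP
    simp only [PredWinG1, not_exists] at hP
    push_neg at hP
    -- hP : ∀ A, (∀ n, A n ∈ 𝒜) → ∃ a, (∀ n, a n ∈ A n) ∧ Set.range a ∈ ℬ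
    have hC : ∀ s : List X, ∃ Cs : Set X,
        Cs ∈ ℬ ∧ Cs ⊆ σ s ∧ Cs.Countable ∧ ∀ x ∈ Cs, x ∉ s := by
      intro s
      obtain ⟨w, hw, hwB⟩ := hP (fun _ => σ s) (fun _ => hσA s)
      refine ⟨Set.range w \ {x | x ∈ s}, ?_, ?_, ?_, ?_⟩
      · exact (hB _ hwB).2 _ Set.diff_subset (((hB _ hwB).1).diff (List.finite_toSet s))
      · exact Set.diff_subset.trans (Set.range_subset_iff.mpr hw)
      · exact (Set.countable_range w).mono Set.diff_subset
      · intro x hx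
        exact hx.2
    choose C hCB hCσ hCc hCs using hC
    obtain ⟨f, hf⟩ := (reachT_countable C hCc).exists_eq_range ⟨[], ReachT.nil⟩
    obtain ⟨a, ha, hRa⟩ := hP (fun m => C (f m)) (fun m => hBA (hCB (f m)))
    obtain ⟨x₀, -⟩ := ((hB _ (hCB [])).1).nonempty
    have key : ∀ s : List X, ∃ x, ReachT C s → x ∈ C s ∧ x ∈ Set.range a := by
      intro s
      by_cases h : ReachT C s
      · have hs : s ∈ Set.range f := by rw [← hf]; exact h
        obtain ⟨m, hm⟩ := hs
        exact ⟨a m, fun _ => ⟨hm ▸ ha m, Set.mem_range_self m⟩⟩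
      · exact ⟨x₀, fun h' => absurd h' h⟩
    choose g hg using key
    set L : ℕ → List X := fun n => Nat.rec [] (fun _ s => s ++ [g s]) n with hLdef
    have hLsucc : ∀ n, L (n + 1) = L n ++ [g (L n)] := fun n => rfl
    set b : ℕ → X := fun n => g (L n) with hbdef
    have hreach : ∀ n, ReachT C (L n) := by
      intro n
      induction n with
      | zero => exact ReachT.nil
      | succ n ih => exact ReachT.snoc _ _ ih (hg (L n) ih).1
    have hmemC : ∀ n, b n ∈ C (L n) := fun n => (hg (L n) (hreach n)).1
    have hmema : ∀ n, b n ∈ Set.range a := fun n => (hg (L n) (hreach n)).2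
    have hofn : ∀ n, L n = List.ofFn fun i : Fin n => b i := by
      intro n
      induction n with
      | zero => rfl
      | succ n ih =>
        rw [hLsucc, ih, List.ofFn_succ']
        simp only [List.concat_eq_append, hbdef, Fin.coe_castSucc, Fin.val_last]
        exact congrArg (fun t => _ ++ [g t]) ih.symm
    have hmem : ∀ m n, m < n → b m ∈ L n := by
      intro m n h
      rw [hofn n]
      simp only [List.mem_ofFn]
      exact ⟨⟨m, h⟩, rfl⟩
    have hne : ∀ m n, m < n → b m ≠ b n := by
      intro m n h hEq
      exact hCs (L n) (b n) (hmemC n) (hEq ▸ hmem m n h)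
    have hinj : Function.Injective b := by
      intro m n hEq
      rcases lt_trichotomy m n with h | h | h
      · exact absurd hEq (hne m n h)
      · exact h
      · exact absurd hEq.symm (hne n m h)
    have hrb : Set.range b ∈ ℬ :=
      (hB _ hRa).2 _ (Set.range_subset_iff.mpr hmema) (Set.infinite_range_of_injective hinj)
    exact hσw b (fun n => by rw [← hofn n]; exact hCσ (L n) (hmemC n)) hrb
  · rintro ⟨A, hA, hw⟩
    refine ⟨fun s => A s.length, fun s => hA _, ?_⟩
    intro a ha
    exact hw a fun n => by simpa using ha n
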